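/- The Lobachevsky function Л(x) = −∫₀ˣ log|2 sin t| dt satisfies the distribution law Л(kx)/k = Σ_{r=0}^{k−1} Л(x + rπ/k) for every positive integer k and all real x. -/

import Mathlib

open scoped Real

/-- The Lobachevsky function `Л(x) = −∫₀ˣ log|2 sin t| dt`. -/
noncomputable def lobachevsky (x : ℝ) : ℝ :=
  -∫ t in (0 : ℝ)..x, Real.log |2 * Real.sin t|

open MeasureTheory intervalIntegral

lemma two_sin_exp (θ : ℂ) : 2 * Complex.sin θ =
    Complex.I * Complex.exp (-θ * Complex.I) * (1 - Complex.exp (2 * θ * Complex.I)) := by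
  have h : Complex.exp (θ * Complex.I) =
      Complex.exp (-θ * Complex.I) * Complex.exp (2 * θ * Complex.I) := by
    rw [← Complex.exp_add]; ring_nf
  rw [Complex.sin]
  linear_combination (-Complex.I) * h

lemma prod_two_sin_complex (k : ℕ) (hk : 0 < k) (z : ℂ) :
    ∏ r ∈ Finset.range k, (2 * Complex.sin (z + r * (π : ℂ) / k)) =
      2 * Complex.sin (k * z) := by
  have kC : ((k : ℂ)) ≠ 0 := Nat.cast_ne_zero.2 hk.ne'
  set ζ : ℂ := Complex.exp (2 * (π : ℂ) * Complex.I / k) with hζdef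
  have hζ : IsPrimitiveRoot ζ k := Complex.isPrimitiveRoot_exp k hk.ne'
  set w : ℂ := Complex.exp (2 * z * Complex.I) with hwdef
  have hprod1 : ∏ r ∈ Finset.range k, (1 - ζ ^ r * w)
      = 1 - Complex.exp (2 * ((k : ℂ) * z) * Complex.I) := by
    have h := X_pow_sub_C_eq_prod (R := ℂ) hζ hk (rfl : w ^ k = w ^ k)
    have h2 := congrArg (Polynomial.eval 1) h
    simp only [Polynomial.eval_sub, Polynomial.eval_pow, Polynomial.eval_X, Polynomial.eval_C,
      Polynomial.eval_prod, Polynomial.eval_mul, one_pow] at h2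
    rw [← h2, hwdef, ← Complex.exp_nat_mul]
    ring_nf
  have hfac : ∀ r ∈ Finset.range k, 2 * Complex.sin (z + r * (π : ℂ) / k) =
      (Complex.I * Complex.exp (-(z + r * (π : ℂ) / k) * Complex.I)) * (1 - ζ ^ r * w) := by
    intro r _
    have h3 : Complex.exp (2 * (z + r * (π : ℂ) / k) * Complex.I) = ζ ^ r * w := by
      rw [hζdef, ← Complex.exp_nat_mul, hwdef, ← Complex.exp_add]
      congr 1
      field_simp
      ring
    rw [two_sin_exp, h3]
  rw [Finset.prod_congr rfl hfac, Finset.prod_mul_distrib, Finset.prod_mul_distrib,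
    Finset.prod_const, Finset.card_range, hprod1, ← Complex.exp_sum]
  have hk1 : (1 : ℕ) ≤ k := hk
  have hgauss : (∑ r ∈ Finset.range k, (r : ℂ)) * 2 = (k : ℂ) * ((k : ℂ) - 1) := by
    have h := Finset.sum_range_id_mul_two k
    have h2 : (((∑ i ∈ Finset.range k, i) * 2 : ℕ) : ℂ) = ((k * (k - 1) : ℕ) : ℂ) := by
      exact_mod_cast congrArg (Nat.cast : ℕ → ℂ) h
    push_cast [Nat.cast_sub hk1] at h2
    simpa using h2
  have hsum0 : ∑ r ∈ Finset.range k, (z + (r : ℂ) * (π : ℂ) / k)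
      = (k : ℂ) * z + ((k : ℂ) - 1) * (π : ℂ) / 2 := by
    rw [Finset.sum_add_distrib, Finset.sum_const, Finset.card_range]
    have : ∑ r ∈ Finset.range k, ((r : ℂ) * (π : ℂ) / k)
        = (∑ r ∈ Finset.range k, (r : ℂ)) * (π : ℂ) / k := by
      rw [Finset.sum_mul, Finset.sum_div]
    rw [this]
    field_simp
    linear_combination (π : ℂ) * hgauss
  have hsum : ∑ r ∈ Finset.range k, (-(z + (r : ℂ) * (π : ℂ) / k) * Complex.I)
      = -((k : ℂ) * z) * Complex.I + (((k - 1 : ℕ) : ℂ) * (-((π : ℂ) / 2) * Complex.I)) := by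
    have : ∑ r ∈ Finset.range k, (-(z + (r : ℂ) * (π : ℂ) / k) * Complex.I)
        = -(∑ r ∈ Finset.range k, (z + (r : ℂ) * (π : ℂ) / k)) * Complex.I := by
      rw [← Finset.sum_mul, ← Finset.sum_neg_distrib]
    rw [this, hsum0, Nat.cast_sub hk1]
    push_cast
    ring
  rw [hsum, Complex.exp_add, Complex.exp_nat_mul]
  have hexpI : Complex.exp (-((π : ℂ) / 2) * Complex.I) = -Complex.I := by
    rw [show (-((π : ℂ) / 2) * Complex.I) = ((-(π / 2) : ℝ) : ℂ) * Complex.I by push_cast; ring,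
      Complex.exp_mul_I]
    rw [← Complex.ofReal_cos, ← Complex.ofReal_sin]
    simp [Real.cos_pi_div_two, Real.sin_pi_div_two]
  rw [hexpI]
  have hIk : (Complex.I) ^ k * Complex.exp (-((k : ℂ) * z) * Complex.I) * (-Complex.I) ^ (k - 1)
      = Complex.I * Complex.exp (-((k : ℂ) * z) * Complex.I) := by
    have h1 : (Complex.I) ^ k = Complex.I ^ (k - 1) * Complex.I := by
      rw [← pow_succ, Nat.sub_add_cancel hk1]
    rw [h1]
    have h2 : Complex.I ^ (k - 1) * (-Complex.I) ^ (k - 1) = 1 := by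
      rw [← mul_pow]
      simp [Complex.I_mul_I]
    calc Complex.I ^ (k-1) * Complex.I * Complex.exp (-((k : ℂ) * z) * Complex.I) * (-Complex.I) ^ (k-1)
        = (Complex.I ^ (k-1) * (-Complex.I) ^ (k-1)) * Complex.I * Complex.exp (-((k : ℂ) * z) * Complex.I) := by ring
      _ = _ := by rw [h2]; ring
  rw [two_sin_exp ((k : ℂ) * z)]
  linear_combination (1 - Complex.exp (2 * ((k : ℂ) * z) * Complex.I)) * hIk

lemma prod_two_sin_real (k : ℕ) (hk : 0 < k) (x : ℝ) :
    ∏ r ∈ Finset.range k, (2 * Real.sin (x + r * π / k)) = 2 * Real.sin (k * x) := by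
  have h := prod_two_sin_complex k hk (x : ℂ)
  have h2 : (((∏ r ∈ Finset.range k, (2 * Real.sin (x + r * π / k)) : ℝ)) : ℂ)
      = (((2 * Real.sin (k * x) : ℝ)) : ℂ) := by
    push_cast
    convert h using 1
  exact_mod_cast h2

noncomputable def lobF (t : ℝ) : ℝ := Real.log |2 * Real.sin t|

lemma lobF_eq (t : ℝ) : lobF t = Real.log (2 * Real.sin t) := Real.log_abs _

lemma lobF_even (t : ℝ) : lobF (-t) = lobF t := by
  simp [lobF, Real.sin_neg, mul_neg, abs_neg]

lemma lobF_periodic : Function.Periodic lobF π := by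
  intro t
  simp [lobF, Real.sin_add_pi, mul_neg, abs_neg]

lemma intervalIntegrable_log_01 : IntervalIntegrable Real.log volume 0 1 := by
  have h : IntegrableOn (fun x : ℝ => -Real.log x) (Set.Ioc (0:ℝ) 1) volume := by
    apply integrableOn_deriv_of_nonneg (g := fun x : ℝ => x - x * Real.log x)
      (g' := fun x : ℝ => -Real.log x) (a := (0:ℝ)) (b := (1:ℝ))
    · exact (continuous_id.sub Real.continuous_mul_log).continuousOn
    · intro x hx
      have h1 : HasDerivAt (fun x : ℝ => x * Real.log x) (Real.log x + 1) x :=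
        Real.hasDerivAt_mul_log hx.1.ne'
      have h2 : HasDerivAt (fun x : ℝ => x - x * Real.log x) (1 - (Real.log x + 1)) x :=
        (hasDerivAt_id x).sub h1
      convert h2 using 1
      ring
    · intro x hx
      have := Real.log_nonpos hx.1.le hx.2.le
      linarith
  have h2 : IntegrableOn Real.log (Set.Ioc (0:ℝ) 1) volume := by
    have h3 : IntegrableOn (fun x : ℝ => -(-Real.log x)) (Set.Ioc (0:ℝ) 1) volume := h.neg
    simpa using h3
  rw [intervalIntegrable_iff, Set.uIoc_of_le (by norm_num : (0:ℝ) ≤ 1)]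
  exact h2

lemma intervalIntegrable_log_any (b : ℝ) (hb : 0 ≤ b) :
    IntervalIntegrable Real.log volume 0 b := by
  rcases le_total b 1 with h | h
  · exact intervalIntegrable_log_01.mono_set (by rw [Set.uIcc_of_le hb, Set.uIcc_of_le (by norm_num : (0:ℝ) ≤ 1)]; exact Set.Icc_subset_Icc le_rfl h)
  · refine intervalIntegrable_log_01.trans (intervalIntegrable_log (μ := volume) ?_)
    rw [Set.uIcc_of_le h]
    rintro ⟨h0, -⟩
    linarith
lemma intervalIntegrable_log_sym (b : ℝ) (hb : 0 ≤ b) :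
    IntervalIntegrable Real.log volume (-b) b := by
  have h1 := intervalIntegrable_log_any b hb
  have h2 : IntervalIntegrable (fun x : ℝ => Real.log (-x)) volume (-0) (-b) :=
    (IntervalIntegrable.iff_comp_neg (by simp)).mp h1
  have h3 : (fun x : ℝ => Real.log (-x)) = Real.log := by
    funext x; exact Real.log_neg_eq_log x
  rw [h3, neg_zero] at h2
  exact h2.symm.trans h1

lemma lobF_integrable_center : IntervalIntegrable lobF volume (-(π/2)) (π/2) := by
  set g : ℝ → ℝ := fun t => Real.log 2 + Real.log t + Real.log (Real.sin t / t) with hg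
  have hpi : (0:ℝ) < π/2 := by positivity
  have hgi : IntervalIntegrable g volume (-(π/2)) (π/2) := by
    apply IntervalIntegrable.add
    apply IntervalIntegrable.add
    · exact intervalIntegrable_const
    · exact intervalIntegrable_log_sym _ hpi.le
    · -- bounded measurable
      rw [intervalIntegrable_iff, Set.uIoc_of_le (by linarith : -(π/2) ≤ π/2)]
      apply Measure.integrableOn_of_bounded (M := Real.log (π/2)) measure_Ioc_lt_top.ne
        ((Real.measurable_log.comp (Real.measurable_sin.div measurable_id)).aestronglyMeasurable)
      refine (ae_restrict_mem measurableSet_Ioc).mono fun t ht => ?_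
      simp only [Function.comp_apply, id_eq, Function.comp, id, Pi.div_apply]
      rcases eq_or_ne t 0 with rfl | ht0
      · simp only [Real.sin_zero, zero_div, Real.log_zero, norm_zero]
        exact Real.log_nonneg (by nlinarith [Real.pi_gt_three])
      · have h1 : |t| ≤ π/2 := abs_le.2 ⟨ht.1.le, ht.2⟩
        have hb : 2/π ≤ Real.sin t / t ∧ Real.sin t / t ≤ 1 := by
          rcases ht0.lt_or_gt with hlt | hlt
          · have h2 : 0 < -t := by linarith
            have hs : Real.sin t / t = Real.sin (-t) / (-t) := by
              rw [Real.sin_neg]; rw [neg_div_neg_eq]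
            rw [hs]
            constructor
            · rw [le_div_iff₀ h2]
              exact Real.mul_le_sin h2.le (by rw [abs_of_neg hlt] at h1; linarith)
            · rw [div_le_one h2]
              exact Real.sin_le h2.le
          · constructor
            · rw [le_div_iff₀ hlt]
              exact Real.mul_le_sin hlt.le (by rw [abs_of_pos hlt] at h1; linarith)
            · rw [div_le_one hlt]
              exact Real.sin_le hlt.le
        have hppos : (0:ℝ) < 2/π := by positivity
        rw [Real.norm_eq_abs, abs_le]
        constructor
        · have hlog : Real.log (2/π) ≤ Real.log (Real.sin t / t) :=
            Real.log_le_log hppos hb.1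
          have he : Real.log (2/π) = -Real.log (π/2) := by
            rw [← Real.log_inv]; norm_num
          linarith
        · have hle : Real.log (Real.sin t / t) ≤ Real.log 1 :=
            Real.log_le_log (by linarith) hb.2
          rw [Real.log_one] at hle
          have hlp : 0 ≤ Real.log (π/2) := Real.log_nonneg (by nlinarith [Real.pi_gt_three])
          linarith
  -- transfer via a.e. equality
  rw [intervalIntegrable_iff] at hgi ⊢
  refine hgi.congr ?_
  have h0 : ∀ᵐ t : ℝ ∂volume, t ∉ ({0} : Set ℝ) := (Set.countable_singleton 0).ae_notMem _
  rw [Set.uIoc_of_le (by linarith : -(π/2) ≤ π/2)] at *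
  refine ((ae_restrict_mem measurableSet_Ioc).and (ae_restrict_of_ae h0)).mono ?_
  rintro t ⟨ht, ht0⟩
  rw [Set.mem_singleton_iff] at ht0
  have hsin : Real.sin t ≠ 0 := by
    rcases (Ne.lt_or_gt ht0) with hlt | hlt
    · have h1 : 0 < Real.sin (-t) :=
        Real.sin_pos_of_pos_of_lt_pi (by linarith) (by nlinarith [Real.pi_pos, ht.1])
      rw [Real.sin_neg] at h1
      linarith
    · have h1 : 0 < Real.sin t :=
        Real.sin_pos_of_pos_of_lt_pi hlt (by nlinarith [Real.pi_pos, ht.2])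
      linarith
  have hlog : Real.log (Real.sin t) = Real.log t + Real.log (Real.sin t / t) := by
    rw [← Real.log_mul ht0 (div_ne_zero hsin ht0)]
    congr 1
    field_simp
  show g t = lobF t
  rw [hg, lobF_eq, Real.log_mul two_ne_zero hsin, hlog]
  ring


lemma lobF_integrable (a b : ℝ) : IntervalIntegrable lobF volume a b := by
  have hπ := Real.pi_pos
  have hm : ∀ m : ℤ, IntervalIntegrable lobF volume (-(π/2) - m*π) (π/2 - m*π) := by
    intro m
    have h2 := lobF_integrable_center.comp_add_right ((m:ℝ)*π)
    have h3 : (fun x => lobF (x + (m:ℝ)*π)) = lobF := funext fun x =>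
      (lobF_periodic.int_mul m) x
    rwa [h3] at h2
  have key : ∀ n : ℕ, ∀ m : ℤ, IntervalIntegrable lobF volume
      (-(π/2) - m*π) (π/2 - (m - n)*π) := by
    intro n
    induction n with
    | zero => intro m; simpa using hm m
    | succ n ih =>
      intro m
      have h1 := hm m
      have h2 := ih (m - 1)
      have e : (π/2 - (m:ℝ)*π) = -(π/2) - ((m:ℝ)-1)*π := by push_cast; ring
      rw [e] at h1
      have e2 : (-(π/2) - ((m:ℝ)-1)*π) = -(π/2) - (((m-1:ℤ)):ℝ)*π := by push_cast; ring
      rw [e2] at h1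
      have h3 := h1.trans h2
      have e3 : (π/2 - (((m-1 : ℤ) : ℝ) - (n:ℝ))*π) = π/2 - ((m:ℝ) - (((n+1:ℕ)):ℝ))*π := by
        push_cast; ring
      rwa [e3] at h3
  -- now cover [a,b]
  obtain ⟨n, hn⟩ := exists_nat_ge ((|a| + |b|)/π + 1)
  have hn' : |a| + |b| ≤ (n:ℝ) * π :=
    (div_le_iff₀ hπ).mp (by linarith : (|a| + |b|)/π ≤ (n:ℝ))
  have hInt := key (2*n) (n : ℤ)
  apply hInt.mono_set
  apply Set.uIcc_subset_uIcc <;> rw [Set.mem_uIcc] <;> left <;> constructor <;> push_cast <;>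
    nlinarith [neg_abs_le a, le_abs_self a, neg_abs_le b, le_abs_self b, abs_nonneg a, abs_nonneg b]

lemma lob_eq (x : ℝ) : lobachevsky x = -∫ t in (0:ℝ)..x, lobF t := rfl

lemma key (k : ℕ) (hk : 0 < k) (x : ℝ) :
    (∫ t in (0:ℝ)..((k:ℝ)*x), lobF t) =
      (k:ℝ) * ∑ r ∈ Finset.range k, ∫ t in ((r:ℝ)*π/k)..(x + (r:ℝ)*π/k), lobF t := by
  have kR : ((k:ℝ)) ≠ 0 := Nat.cast_ne_zero.2 hk.ne'
  -- pointwise a.e. identity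
  have hcount : Set.Countable {t : ℝ | Real.sin ((k:ℝ)*t) = 0} := by
    apply Set.Countable.mono ?_ (Set.countable_range fun n : ℤ => (n:ℝ)*π/(k:ℝ))
    intro t ht
    obtain ⟨n, hn⟩ := Real.sin_eq_zero_iff.1 ht
    exact ⟨n, by field_simp [eq_comm] at hn ⊢; linarith [hn]⟩
  have hae : ∀ᵐ t : ℝ, Real.sin ((k:ℝ)*t) ≠ 0 := by
    have hs : {t : ℝ | ¬ Real.sin ((k:ℝ)*t) ≠ 0} = {t : ℝ | Real.sin ((k:ℝ)*t) = 0} := by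
      simp
    rw [ae_iff, hs]
    exact hcount.measure_zero _
  have hpt : ∀ t : ℝ, Real.sin ((k:ℝ)*t) ≠ 0 →
      lobF ((k:ℝ)*t) = ∑ r ∈ Finset.range k, lobF (t + (r:ℝ)*π/k) := by
    intro t ht
    have hprod := prod_two_sin_real k hk t
    have hne : (∏ r ∈ Finset.range k, (2 * Real.sin (t + (r:ℝ)*π/k))) ≠ 0 := by
      rw [hprod]; exact mul_ne_zero two_ne_zero ht
    have hfac := Finset.prod_ne_zero_iff.mp hne
    calc lobF ((k:ℝ)*t) = Real.log |∏ r ∈ Finset.range k, (2 * Real.sin (t + (r:ℝ)*π/k))| := by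
          rw [lobF, hprod]
      _ = Real.log (∏ r ∈ Finset.range k, |2 * Real.sin (t + (r:ℝ)*π/k)|) := by
          rw [Finset.abs_prod]
      _ = ∑ r ∈ Finset.range k, Real.log |2 * Real.sin (t + (r:ℝ)*π/k)| := by
          apply Real.log_prod
          intro r hr
          exact abs_ne_zero.2 (hfac r hr)
      _ = ∑ r ∈ Finset.range k, lobF (t + (r:ℝ)*π/k) := rfl
  -- substitution
  have h1 : (∫ t in (0:ℝ)..x, lobF ((k:ℝ)*t)) = (k:ℝ)⁻¹ • ∫ t in ((k:ℝ)*0)..((k:ℝ)*x), lobF t :=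
    intervalIntegral.integral_comp_mul_left lobF kR
  have h2 : (∫ t in (0:ℝ)..x, lobF ((k:ℝ)*t))
      = ∫ t in (0:ℝ)..x, ∑ r ∈ Finset.range k, lobF (t + (r:ℝ)*π/k) := by
    apply intervalIntegral.integral_congr_ae
    exact hae.mono fun t ht _ => hpt t ht
  have h3 : (∫ t in (0:ℝ)..x, ∑ r ∈ Finset.range k, lobF (t + (r:ℝ)*π/k))
      = ∑ r ∈ Finset.range k, ∫ t in (0:ℝ)..x, lobF (t + (r:ℝ)*π/k) := by
    apply intervalIntegral.integral_finset_sum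
    intro r _
    have h := (lobF_integrable ((r:ℝ)*π/k) (x + (r:ℝ)*π/k)).comp_add_right ((r:ℝ)*π/k)
    simpa using h
  have h4 : ∀ r : ℕ, (∫ t in (0:ℝ)..x, lobF (t + (r:ℝ)*π/k))
      = ∫ t in ((r:ℝ)*π/k)..(x + (r:ℝ)*π/k), lobF t := by
    intro r
    simpa using intervalIntegral.integral_comp_add_right (a := (0:ℝ)) (b := x) lobF ((r:ℝ)*π/k)
  rw [mul_zero] at h1
  have := h1.symm.trans (h2.trans h3)
  rw [smul_eq_mul] at this
  calc (∫ t in (0:ℝ)..((k:ℝ)*x), lobF t) = (k:ℝ) * ((k:ℝ)⁻¹ * ∫ t in (0:ℝ)..((k:ℝ)*x), lobF t) := by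
        field_simp
    _ = (k:ℝ) * ∑ r ∈ Finset.range k, ∫ t in ((r:ℝ)*π/k)..(x + (r:ℝ)*π/k), lobF t := by
        rw [this]
        exact congrArg _ (Finset.sum_congr rfl fun r _ => h4 r)

lemma key2 (k : ℕ) (hk : 0 < k) (x : ℝ) :
    lobachevsky ((k:ℝ)*x) = (k:ℝ) * ∑ r ∈ Finset.range k,
      (lobachevsky (x + (r:ℝ)*π/k) - lobachevsky ((r:ℝ)*π/k)) := by
  have h := key k hk x
  have h5 : ∀ r : ℕ, (∫ t in ((r:ℝ)*π/k)..(x + (r:ℝ)*π/k), lobF t)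
      = (lobachevsky ((r:ℝ)*π/k) - lobachevsky (x + (r:ℝ)*π/k)) := by
    intro r
    have := intervalIntegral.integral_interval_sub_left
      (lobF_integrable 0 (x + (r:ℝ)*π/k)) (lobF_integrable 0 ((r:ℝ)*π/k))
    rw [lob_eq, lob_eq]
    rw [← this]
    ring
  rw [lob_eq, h, Finset.sum_congr rfl fun r _ => h5 r]
  rw [← mul_neg, ← Finset.sum_neg_distrib]
  congr 1
  apply Finset.sum_congr rfl
  intro r _
  ring

lemma intF_pi : (∫ t in (0:ℝ)..π, lobF t) = 0 := by
  have h := key 2 (by norm_num) (π/2)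
  have hadd := intervalIntegral.integral_add_adjacent_intervals
    (lobF_integrable 0 (π/2)) (lobF_integrable (π/2) π)
  rw [Finset.sum_range_succ, Finset.sum_range_one] at h
  norm_num at h
  rw [hadd, show ((2:ℝ) * (π/2)) = π by ring] at h
  linarith

lemma lob_zero : lobachevsky 0 = 0 := by
  rw [lob_eq, intervalIntegral.integral_same, neg_zero]

lemma lob_pi : lobachevsky π = 0 := by
  rw [lob_eq, intF_pi, neg_zero]

lemma lob_neg (x : ℝ) : lobachevsky (-x) = -lobachevsky x := by
  have h1 : (∫ t in (0:ℝ)..x, lobF (-t)) = ∫ t in (-x)..(0:ℝ), lobF t := by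
    simpa using intervalIntegral.integral_comp_neg (a := (0:ℝ)) (b := x) lobF
  have h2 : (∫ t in (0:ℝ)..x, lobF (-t)) = ∫ t in (0:ℝ)..x, lobF t := by
    apply intervalIntegral.integral_congr
    intro t _
    exact lobF_even t
  have h3 : (∫ t in (0:ℝ)..(-x), lobF t) = -∫ t in (-x)..(0:ℝ), lobF t :=
    intervalIntegral.integral_symm _ _
  rw [lob_eq, lob_eq, h3, ← h1, h2, neg_neg]

lemma lob_periodic (x : ℝ) : lobachevsky (x + π) = lobachevsky x := by
  have hadd := intervalIntegral.integral_add_adjacent_intervals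
    (lobF_integrable 0 x) (lobF_integrable x (x + π))
  have hper : (∫ t in x..(x+π), lobF t) = ∫ t in (0:ℝ)..((0:ℝ)+π), lobF t :=
    lobF_periodic.intervalIntegral_add_eq x 0
  rw [zero_add, intF_pi] at hper
  rw [lob_eq, lob_eq, ← hadd, hper, add_zero]

lemma S_zero (k : ℕ) (hk : 0 < k) :
    ∑ r ∈ Finset.range k, lobachevsky ((r:ℝ)*π/k) = 0 := by
  have kR : ((k:ℝ)) ≠ 0 := Nat.cast_ne_zero.2 hk.ne'
  set g : ℕ → ℝ := fun r => lobachevsky ((r:ℝ)*π/k) with hg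
  have hrefl : ∑ r ∈ Finset.range k, g (k - 1 - r) = ∑ r ∈ Finset.range k, g r :=
    Finset.sum_range_reflect g k
  have hterm : ∀ r ∈ Finset.range k, g (k - 1 - r) = -g (r + 1) := by
    intro r hr
    rw [Finset.mem_range] at hr
    have hcast : ((k - 1 - r : ℕ) : ℝ) = (k:ℝ) - 1 - r := by
      have h1 : r ≤ k - 1 := Nat.le_sub_one_of_lt hr
      rw [Nat.cast_sub h1, Nat.cast_sub hk]
      norm_num
    have harg : ((k:ℝ) - 1 - r) * π / k = -( ((r:ℝ)+1) * π / k) + π := by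
      field_simp
      ring
    rw [hg]
    simp only []
    rw [hcast, harg, lob_periodic, lob_neg]
    push_cast
    ring_nf
  have hshift : ∑ r ∈ Finset.range k, g (r + 1)
      = (∑ r ∈ Finset.range k, g r) + g k - g 0 := by
    have h1 := Finset.sum_range_succ g k
    have h2 := Finset.sum_range_succ' g k
    rw [h1] at h2
    linarith
  have hgk : g k = 0 := by
    have he : ((k:ℝ)) * π / k = π := by field_simp
    rw [hg]
    simp only []
    rw [he]
    exact lob_pi
  have hg0 : g 0 = 0 := by
    rw [hg]; simp only []; norm_num; exact lob_zero
  rw [Finset.sum_congr rfl hterm, Finset.sum_neg_distrib] at hrefl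
  rw [hgk, hg0] at hshift
  linarith

/-- The distribution law `Л(kx)/k = ∑_{r=0}^{k−1} Л(x + rπ/k)` for all positive
integers `k` and real `x`. -/
theorem lobachevsky_distribution (k : ℕ) (hk : 0 < k) (x : ℝ) :
    lobachevsky (k * x) / k =
      ∑ r ∈ Finset.range k, lobachevsky (x + r * Real.pi / k) := by
  have kR : ((k:ℝ)) ≠ 0 := Nat.cast_ne_zero.2 hk.ne'
  have h := key2 k hk x
  rw [Finset.sum_sub_distrib, S_zero k hk, sub_zero] at h
  rw [h]
  field_simp
  refine Finset.sum_congr rfl fun r _ => ?_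
  congr 1
  ring
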